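/- For every n ≥ 5, there is a Cayley graph Γ on Sym(n) with Cayley index 2 whose automorphism group contains a regular subgroup isomorphic to Alt(n) × ℤ₂. Explicitly, one may take the connection set T = {(1 2), (2 3), (2 4)} ∪ {(i i+1) : 4 ≤ i ≤ n−1}. -/

import Mathlib

/-- The automorphism group of a digraph given by an adjacency relation. -/
def dAut {V : Type*} (adj : V → V → Prop) : Subgroup (Equiv.Perm V) where
  carrier := {σ | ∀ u v : V, adj (σ u) (σ v) ↔ adj u v}
  one_mem' := by intro u v; rfl
  mul_mem' := by
    intro a b ha hb u v
    simp only [Set.mem_setOf_eq] at *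
    rw [Equiv.Perm.mul_apply, Equiv.Perm.mul_apply, ha, hb]
  inv_mem' := by
    intro a ha u v
    simpa using (ha (a⁻¹ u) (a⁻¹ v)).symm

/-- Adjacency of the Cayley digraph `Cay(G,S)`. -/
def cayAdj (G : Type*) [Group G] (S : Set G) : G → G → Prop :=
  fun u v => v * u⁻¹ ∈ S

/-- The right regular representation of `G` in `Equiv.Perm G`. -/
def rightReg (G : Type*) [Group G] : G →* Equiv.Perm G where
  toFun g := Equiv.mulRight g⁻¹
  map_one' := by ext x; simp
  map_mul' := by intro a b; ext x; simp [mul_assoc]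

/-- The right regular representation of `G` as a subgroup of `Aut(Cay(G,S))`. -/
def cayleyRR (G : Type*) [Group G] (S : Set G) :
    Subgroup (dAut (cayAdj G S)) :=
  ((rightReg G).range).subgroupOf (dAut (cayAdj G S))

/-- A subgroup of `Equiv.Perm V` is regular if it is sharply transitive on `V`. -/
def IsRegularSub {V : Type*} (H : Subgroup (Equiv.Perm V)) : Prop :=
  ∀ v w : V, ∃! h : H, (h : Equiv.Perm V) v = w

/-- Adjacency of the cartesian product of two digraphs. -/
def cartAdj {α β : Type*} (adjG : α → α → Prop) (adjD : β → β → Prop) :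
    α × β → α × β → Prop :=
  fun u v => (u.1 = v.1 ∧ adjD u.2 v.2) ∨ (u.2 = v.2 ∧ adjG u.1 v.1)

/-- `pathLe adj i u v` : there is a directed path of length at most `i` from `u` to `v`. -/
def pathLe {V : Type*} (adj : V → V → Prop) : ℕ → V → V → Prop
  | 0, u, v => u = v
  | (n+1), u, v => pathLe adj n u v ∨ ∃ w, pathLe adj n u w ∧ adj w v


namespace S19
open Equiv

section Generic
variable {α : Type*} [DecidableEq α]

variable {α : Type*} [DecidableEq α]

lemma swap_ne_one {x y : α} (h : x ≠ y) : Equiv.swap x y ≠ 1 := by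
  intro he
  have := congrArg (fun f => f x) he
  simp [Equiv.swap_apply_left] at this
  exact h this.symm

lemma moved_swap {a b x : α} (h : Equiv.swap a b x ≠ x) : x = a ∨ x = b := by
  by_contra hc
  push_neg at hc
  exact h (Equiv.swap_apply_of_ne_of_ne hc.1 hc.2)

lemma three_moved_not_swap {q : Equiv.Perm α} {x y p1 p2 p3 : α}
    (hq : q = Equiv.swap x y) (h12 : p1 ≠ p2) (h13 : p1 ≠ p3) (h23 : p2 ≠ p3)
    (m1 : q p1 ≠ p1) (m2 : q p2 ≠ p2) (m3 : q p3 ≠ p3) : False := by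
  subst hq
  rcases moved_swap m1 with h1 | h1 <;> rcases moved_swap m2 with h2 | h2 <;>
    rcases moved_swap m3 with h3 | h3 <;> subst h1 <;> subst h2 <;> subst h3 <;> simp_all

lemma commute_swap_disjoint {a b c d : α} (hac : a ≠ c) (had : a ≠ d)
    (hbc : b ≠ c) (hbd : b ≠ d) : Commute (Equiv.swap a b) (Equiv.swap c d) := by
  have h := Equiv.swap_apply_apply (Equiv.swap c d) a b
  rw [Equiv.swap_apply_of_ne_of_ne hac had, Equiv.swap_apply_of_ne_of_ne hbc hbd] at h
  have h' : Equiv.swap c d * Equiv.swap a b * (Equiv.swap c d)⁻¹ = Equiv.swap a b := h.symm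
  rw [Equiv.swap_inv] at h'
  unfold Commute SemiconjBy
  calc Equiv.swap a b * Equiv.swap c d
      = (Equiv.swap c d * Equiv.swap a b * Equiv.swap c d) * Equiv.swap c d := by rw [h']
    _ = Equiv.swap c d * Equiv.swap a b := by
        rw [mul_assoc, Equiv.swap_mul_self, mul_one]

lemma not_commute_swap {a b c : α} (hab : a ≠ b) (hbc : b ≠ c) (hac : a ≠ c) :
    ¬ Commute (Equiv.swap a b) (Equiv.swap b c) := by
  intro h
  have := congrArg (fun f => f c) h
  simp only [Equiv.Perm.mul_apply] at this
  rw [Equiv.swap_apply_right, Equiv.swap_apply_right,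
    Equiv.swap_apply_of_ne_of_ne hac.symm hbc.symm] at this
  rw [Equiv.swap_apply_right] at this
  exact hab this

lemma swap_eq_swap_iff {a b c d : α} (hab : a ≠ b) :
    Equiv.swap a b = Equiv.swap c d ↔ (a = c ∧ b = d) ∨ (a = d ∧ b = c) := by
  constructor
  · intro h
    have ha := congrArg (fun f => f a) h
    simp only [Equiv.swap_apply_left] at ha
    by_cases hc : a = c
    · subst hc
      rw [Equiv.swap_apply_left] at ha
      exact Or.inl ⟨rfl, ha⟩
    · by_cases hd : a = d
      · subst hd
        rw [Equiv.swap_apply_right] at ha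
        exact Or.inr ⟨rfl, ha⟩
      · rw [Equiv.swap_apply_of_ne_of_ne hc hd] at ha
        exact absurd ha.symm hab
  · rintro (⟨rfl, rfl⟩ | ⟨rfl, rfl⟩)
    · rfl
    · exact Equiv.swap_comm _ _

/-- Key local lemma (no-triangle ⇒ no extra common neighbours). -/
lemma A2 {T : Set (Equiv.Perm α)}
    (hswap : ∀ u ∈ T, ∃ x y, x ≠ y ∧ u = Equiv.swap x y)
    {s t : Equiv.Perm α} (hs : s ∈ T) (ht : t ∈ T)
    {a b c : α} (hab : a ≠ b) (hbc : b ≠ c) (hac : a ≠ c)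
    (hsv : s = Equiv.swap a b) (htv : t = Equiv.swap b c)
    (hclass : ∀ u ∈ T, (∀ x, x ≠ a → x ≠ b → x ≠ c → u x = x) → u = s ∨ u = t)
    {p : Equiv.Perm α} (hp : p ∈ T) (hps : p ≠ s) : p * s * t ∉ T := by
  intro hq
  set q : Equiv.Perm α := p * s * t with hqdef
  have hqz : ∀ w, q w = p ((s * t) w) := by
    intro w; rw [hqdef, mul_assoc]; rfl
  obtain ⟨x, y, hxy, hqxy⟩ := hswap q hq
  obtain ⟨u, v, huv, hpuv⟩ := hswap p hp
  have hpinv : ∀ z, p (p z) = z := by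
    intro z; rw [hpuv]; exact Equiv.swap_apply_self _ _ _
  have hza : (s * t) a = b := by
    rw [hsv, htv]; simp only [Equiv.Perm.mul_apply]
    rw [Equiv.swap_apply_of_ne_of_ne hab hac, Equiv.swap_apply_left]
  have hzb : (s * t) b = c := by
    rw [hsv, htv]; simp only [Equiv.Perm.mul_apply]
    rw [Equiv.swap_apply_left, Equiv.swap_apply_of_ne_of_ne hac.symm hbc.symm]
  have hzc : (s * t) c = a := by
    rw [hsv, htv]; simp only [Equiv.Perm.mul_apply]
    rw [Equiv.swap_apply_right, Equiv.swap_apply_right]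
  have hzout : ∀ z, z ≠ a → z ≠ b → z ≠ c → (s * t) z = z := by
    intro z h1 h2 h3
    rw [hsv, htv]; simp only [Equiv.Perm.mul_apply]
    rw [Equiv.swap_apply_of_ne_of_ne h2 h3, Equiv.swap_apply_of_ne_of_ne h1 h2]
  have hqa : q a = p b := by rw [hqz, hza]
  have hqb : q b = p c := by rw [hqz, hzb]
  have hqc : q c = p a := by rw [hqz, hzc]
  have htt : t * t = 1 := by rw [htv]; exact Equiv.swap_mul_self _ _
  by_cases hpfix : ∀ z, z ≠ a → z ≠ b → z ≠ c → p z = z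
  · -- p is supported in {a,b,c}, so p = t (since p ≠ s)
    have hpt : p = t := (hclass p hp hpfix).resolve_left hps
    have hq2 : t * s * t = q := by rw [hqdef, hpt]
    have hqfix : ∀ z, z ≠ a → z ≠ b → z ≠ c → q z = z := by
      intro z h1 h2 h3
      rw [hqz, hzout z h1 h2 h3]
      exact hpfix z h1 h2 h3
    rcases hclass q hq hqfix with h | h
    · -- t * s * t = s ⇒ Commute s t, contradiction
      have h2 : t * s * t = s := by rw [hq2, h]
      have h3 : t * s = s * t := by
        calc t * s = (t * s * t) * t := by rw [mul_assoc, mul_assoc, htt, mul_one]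
          _ = s * t := by rw [h2]
      rw [hsv, htv] at h3
      have hcc := congrArg (fun f => f c) h3
      simp only [Equiv.Perm.mul_apply] at hcc
      rw [Equiv.swap_apply_right, Equiv.swap_apply_right,
        Equiv.swap_apply_of_ne_of_ne hac.symm hbc.symm, Equiv.swap_apply_right] at hcc
      exact hab hcc.symm
    · -- t * s * t = t ⇒ s = t, contradiction
      have h2 : t * s * t = t := by rw [hq2, h]
      have h3 : s * t = 1 := by
        calc s * t = (t * t) * s * t := by rw [htt, one_mul]
          _ = t * (t * s * t) := by rw [mul_assoc, mul_assoc, mul_assoc]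
          _ = t * t := by rw [h2]
          _ = 1 := htt
      have h4 : s = t := by
        have := congrArg (fun w => w * t⁻¹) h3
        simpa [mul_assoc, htv, Equiv.swap_inv, Equiv.swap_mul_self] using this
      rw [hsv, htv] at h4
      have ha2 := congrArg (fun f => f a) h4
      simp only [Equiv.swap_apply_left] at ha2
      rw [Equiv.swap_apply_of_ne_of_ne hab hac] at ha2
      exact hab ha2.symm
  · push_neg at hpfix
    obtain ⟨d, hda, hdb, hdc, hpd⟩ := hpfix
    have hqd : q d ≠ d := by
      rw [hqz, hzout d hda hdb hdc]
      exact hpd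
    have htwo : (q a ≠ a ∧ q b ≠ b) ∨ (q a ≠ a ∧ q c ≠ c) ∨ (q b ≠ b ∧ q c ≠ c) := by
      by_cases h1 : q a = a <;> by_cases h2 : q b = b <;> by_cases h3 : q c = c
      · exfalso
        rw [hqa] at h1; rw [hqb] at h2
        have hpa : p a = b := by rw [← h1, hpinv]
        have : p c = p a := by rw [h2, hpa]
        exact hac (p.injective this).symm
      · exfalso
        rw [hqa] at h1; rw [hqb] at h2
        have hpa : p a = b := by rw [← h1, hpinv]
        have : p c = p a := by rw [h2, hpa]
        exact hac (p.injective this).symm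
      · exfalso
        rw [hqa] at h1; rw [hqc] at h3
        have hpa : p a = b := by rw [← h1, hpinv]
        rw [hpa] at h3
        exact hbc h3
      · exact Or.inr (Or.inr ⟨h2, h3⟩)
      · exfalso
        rw [hqb] at h2; rw [hqc] at h3
        have hpb : p b = c := by rw [← h2, hpinv]
        have : p a = p b := by rw [h3, hpb]
        exact hab (p.injective this)
      · exact Or.inr (Or.inl ⟨h1, h3⟩)
      · exact Or.inl ⟨h1, h2⟩
      · exact Or.inl ⟨h1, h2⟩
    rcases htwo with ⟨m1, m2⟩ | ⟨m1, m2⟩ | ⟨m1, m2⟩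
    · exact three_moved_not_swap hqxy hab hda.symm hdb.symm m1 m2 hqd
    · exact three_moved_not_swap hqxy hac hda.symm hdc.symm m1 m2 hqd
    · exact three_moved_not_swap hqxy hbc hdb.symm hdc.symm m1 m2 hqd


end Generic

lemma mk_ne {n i j : ℕ} {hi : i < n} {hj : j < n} (h : i ≠ j) :
    (⟨i, hi⟩ : Fin n) ≠ ⟨j, hj⟩ := fun he => h (congrArg Fin.val he)

/-- Index-`i` generator: `(0 1), (1 2), (1 3), (3 4), (4 5), ...` -/
def EE (n i : ℕ) : Equiv.Perm (Fin n) :=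
  if h : i + 1 < n then
    if h2 : i = 2 then Equiv.swap ⟨1, by omega⟩ ⟨3, by omega⟩
    else Equiv.swap ⟨i, Nat.lt_of_succ_lt h⟩ ⟨i + 1, h⟩
  else 1

lemma EE_ne_two {n i : ℕ} (h : i + 1 < n) (h2 : i ≠ 2) :
    EE n i = Equiv.swap ⟨i, by linarith⟩ ⟨i + 1, h⟩ := by
  rw [EE, dif_pos h, dif_neg h2]

lemma EE_two {n : ℕ} (h : 2 + 1 < n) :
    EE n 2 = Equiv.swap ⟨1, by omega⟩ ⟨3, by omega⟩ := by
  rw [EE, dif_pos h, dif_pos rfl]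

lemma EE_form (n : ℕ) {i : ℕ} (h : i + 1 < n) :
    ∃ x y : Fin n, x ≠ y ∧ EE n i = Equiv.swap x y ∧
      ((i ≠ 2 ∧ x.val = i ∧ y.val = i + 1) ∨ (i = 2 ∧ x.val = 1 ∧ y.val = 3)) := by
  by_cases h2 : i = 2
  · subst h2
    exact ⟨⟨1, by omega⟩, ⟨3, by omega⟩, mk_ne (by omega), EE_two h,
      Or.inr ⟨rfl, rfl, rfl⟩⟩
  · exact ⟨⟨i, by omega⟩, ⟨i + 1, h⟩, mk_ne (by omega), EE_ne_two h h2,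
      Or.inl ⟨h2, rfl, rfl⟩⟩

lemma classify_k {n k : ℕ} (hk : k + 1 < n) {va vb vc : ℕ}
    {ha : va < n} {hb : vb < n} {hc : vc < n}
    (hfix : ∀ x : Fin n, x ≠ ⟨va, ha⟩ → x ≠ ⟨vb, hb⟩ → x ≠ ⟨vc, hc⟩ → EE n k x = x) :
    (k ≠ 2 ∧ (k = va ∨ k = vb ∨ k = vc) ∧ (k + 1 = va ∨ k + 1 = vb ∨ k + 1 = vc)) ∨
      (k = 2 ∧ (1 = va ∨ 1 = vb ∨ 1 = vc) ∧ (3 = va ∨ 3 = vb ∨ 3 = vc)) := by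
  obtain ⟨x, y, hxy, hkeq, hidx⟩ := EE_form n hk
  have hx : x = (⟨va, ha⟩ : Fin n) ∨ x = (⟨vb, hb⟩ : Fin n) ∨ x = (⟨vc, hc⟩ : Fin n) := by
    by_contra hcon; push_neg at hcon
    have := hfix x hcon.1 hcon.2.1 hcon.2.2
    rw [hkeq, Equiv.swap_apply_left] at this; exact hxy this.symm
  have hy : y = (⟨va, ha⟩ : Fin n) ∨ y = (⟨vb, hb⟩ : Fin n) ∨ y = (⟨vc, hc⟩ : Fin n) := by
    by_contra hcon; push_neg at hcon
    have := hfix y hcon.1 hcon.2.1 hcon.2.2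
    rw [hkeq, Equiv.swap_apply_right] at this; exact hxy this
  have hxv : x.val = va ∨ x.val = vb ∨ x.val = vc := by
    rcases hx with h | h | h <;> rw [h] <;> simp
  have hyv : y.val = va ∨ y.val = vb ∨ y.val = vc := by
    rcases hy with h | h | h <;> rw [h] <;> simp
  rcases hidx with ⟨h2, hx2, hy2⟩ | ⟨h2, hx2, hy2⟩
  · left; exact ⟨h2, by omega, by omega⟩
  · right; exact ⟨h2, by omega, by omega⟩

lemma adj_rep {n : ℕ} (hn : 5 ≤ n) {i j : ℕ} (hi : i + 1 < n) (hj : j + 1 < n)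
    (hadj : j = i + 1 ∨ i = j + 1 ∨ (i = 0 ∧ j = 2) ∨ (i = 2 ∧ j = 0)) :
    ∃ a b c : Fin n, a ≠ b ∧ b ≠ c ∧ a ≠ c ∧
      EE n i = Equiv.swap a b ∧ EE n j = Equiv.swap b c ∧
      (∀ k, k + 1 < n → (∀ x : Fin n, x ≠ a → x ≠ b → x ≠ c → EE n k x = x) →
        k = i ∨ k = j) := by
  have done_case : ∀ (va vb vc : ℕ) (ha : va < n) (hb : vb < n) (hc : vc < n),
      va ≠ vb → vb ≠ vc → va ≠ vc →
      EE n i = Equiv.swap ⟨va, ha⟩ ⟨vb, hb⟩ → EE n j = Equiv.swap ⟨vb, hb⟩ ⟨vc, hc⟩ →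
      (∀ k, k + 1 < n →
        (k ≠ 2 ∧ (k = va ∨ k = vb ∨ k = vc) ∧ (k + 1 = va ∨ k + 1 = vb ∨ k + 1 = vc)) ∨
          (k = 2 ∧ (1 = va ∨ 1 = vb ∨ 1 = vc) ∧ (3 = va ∨ 3 = vb ∨ 3 = vc)) →
        k = i ∨ k = j) →
      ∃ a b c : Fin n, a ≠ b ∧ b ≠ c ∧ a ≠ c ∧
        EE n i = Equiv.swap a b ∧ EE n j = Equiv.swap b c ∧
        (∀ k, k + 1 < n → (∀ x : Fin n, x ≠ a → x ≠ b → x ≠ c → EE n k x = x) →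
          k = i ∨ k = j) := by
    intro va vb vc ha hb hc d1 d2 d3 h1 h2 hcl
    refine ⟨⟨va, ha⟩, ⟨vb, hb⟩, ⟨vc, hc⟩, mk_ne d1, mk_ne d2, mk_ne d3, h1, h2, ?_⟩
    intro k hk hfix
    exact hcl k hk (classify_k hk hfix)
  rcases hadj with rfl | rfl | ⟨rfl, rfl⟩ | ⟨rfl, rfl⟩
  · -- j = i + 1
    rcases Nat.lt_or_ge i 3 with hi3 | hi3
    · interval_cases i
      · exact done_case 0 1 2 (by omega) (by omega) (by omega) (by omega) (by omega) (by omega)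
          (EE_ne_two hi (by omega)) (EE_ne_two hj (by omega)) (fun k hk h => by omega)
      · exact done_case 2 1 3 (by omega) (by omega) (by omega) (by omega) (by omega) (by omega)
          (by rw [EE_ne_two hi (by omega)]; exact Equiv.swap_comm _ _) (EE_two hj)
          (fun k hk h => by omega)
      · exact done_case 1 3 4 (by omega) (by omega) (by omega) (by omega) (by omega) (by omega)
          (EE_two hi) (EE_ne_two hj (by omega)) (fun k hk h => by omega)
    · exact done_case i (i + 1) (i + 2) (by omega) (by omega) (by omega) (by omega) (by omega)
        (by omega) (EE_ne_two hi (by omega)) (EE_ne_two hj (by omega)) (fun k hk h => by omega)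
  · -- i = j + 1
    rcases Nat.lt_or_ge j 3 with hj3 | hj3
    · interval_cases j
      · exact done_case 2 1 0 (by omega) (by omega) (by omega) (by omega) (by omega) (by omega)
          (by rw [EE_ne_two hi (by omega)]; exact Equiv.swap_comm _ _)
          (by rw [EE_ne_two hj (by omega)]; exact Equiv.swap_comm _ _) (fun k hk h => by omega)
      · exact done_case 3 1 2 (by omega) (by omega) (by omega) (by omega) (by omega) (by omega)
          (by rw [EE_two hi]; exact Equiv.swap_comm _ _)
          (EE_ne_two hj (by omega)) (fun k hk h => by omega)
      · exact done_case 4 3 1 (by omega) (by omega) (by omega) (by omega) (by omega) (by omega)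
          (by rw [EE_ne_two hi (by omega)]; exact Equiv.swap_comm _ _)
          (by rw [EE_two hj]; exact Equiv.swap_comm _ _) (fun k hk h => by omega)
    · exact done_case (j + 2) (j + 1) j (by omega) (by omega) (by omega) (by omega) (by omega)
        (by omega)
        (by rw [EE_ne_two hi (by omega)]; exact Equiv.swap_comm _ _)
        (by rw [EE_ne_two hj (by omega)]; exact Equiv.swap_comm _ _) (fun k hk h => by omega)
  · exact done_case 0 1 3 (by omega) (by omega) (by omega) (by omega) (by omega) (by omega)
      (EE_ne_two hi (by omega)) (EE_two hj) (fun k hk h => by omega)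
  · exact done_case 3 1 0 (by omega) (by omega) (by omega) (by omega) (by omega) (by omega)
      (by rw [EE_two hi]; exact Equiv.swap_comm _ _)
      (by rw [EE_ne_two hj (by omega)]; exact Equiv.swap_comm _ _) (fun k hk h => by omega)

lemma EE_inj {n : ℕ} {i j : ℕ} (hi : i + 1 < n) (hj : j + 1 < n)
    (h : EE n i = EE n j) : i = j := by
  obtain ⟨x, y, hxy, hie, hidx⟩ := EE_form n hi
  obtain ⟨x', y', hxy', hje, hjdx⟩ := EE_form n hj
  rw [hie, hje] at h
  rcases (swap_eq_swap_iff hxy).mp h with ⟨h1, h2⟩ | ⟨h1, h2⟩ <;>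
    apply_fun Fin.val at h1 h2 <;> rcases hidx with ⟨u1,u2,u3⟩|⟨u1,u2,u3⟩ <;>
    rcases hjdx with ⟨v1,v2,v3⟩|⟨v1,v2,v3⟩ <;> omega

lemma commute_EE {n : ℕ} {i j : ℕ} (hi : i + 1 < n) (hj : j + 1 < n)
    (h : ¬(j = i + 1 ∨ i = j + 1 ∨ (i = 0 ∧ j = 2) ∨ (i = 2 ∧ j = 0) ∨ i = j)) :
    Commute (EE n i) (EE n j) := by
  push_neg at h
  obtain ⟨x, y, hxy, hie, hidx⟩ := EE_form n hi
  obtain ⟨x', y', hxy', hje, hjdx⟩ := EE_form n hj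
  rw [hie, hje]
  rcases hidx with ⟨u1,u2,u3⟩|⟨u1,u2,u3⟩ <;> rcases hjdx with ⟨v1,v2,v3⟩|⟨v1,v2,v3⟩ <;>
    exact commute_swap_disjoint
      (fun he => by apply_fun Fin.val at he; omega)
      (fun he => by apply_fun Fin.val at he; omega)
      (fun he => by apply_fun Fin.val at he; omega)
      (fun he => by apply_fun Fin.val at he; omega)

lemma nadj_iff {n : ℕ} (hn : 5 ≤ n) {i j : ℕ} (hi : i + 1 < n) (hj : j + 1 < n) :
    ¬ Commute (EE n i) (EE n j) ↔
      (j = i + 1 ∨ i = j + 1 ∨ (i = 0 ∧ j = 2) ∨ (i = 2 ∧ j = 0)) := by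
  constructor
  · intro h
    by_contra hc
    by_cases hij : i = j
    · subst hij; exact h (Commute.refl _)
    · exact h (commute_EE hi hj (by tauto))
  · intro hadj
    obtain ⟨a, b, c, hab, hbc, hac, he1, he2, _⟩ := adj_rep hn hi hj hadj
    rw [he1, he2]
    exact not_commute_swap hab hbc hac

/-- The combinatorial rigidity of the noncommuting graph: any injective,
commutation-preserving self-map of the index set is the identity or swaps 0,1. -/
lemma L3 {n : ℕ} (hn : 5 ≤ n) (g : ℕ → ℕ)
    (hgb : ∀ i, i + 1 < n → g i + 1 < n)
    (hginj : ∀ i j, i + 1 < n → j + 1 < n → g i = g j → i = j)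
    (hcomm : ∀ i j, i + 1 < n → j + 1 < n →
      (Commute (EE n i) (EE n j) ↔ Commute (EE n (g i)) (EE n (g j)))) :
    (∀ i, 2 ≤ i → i + 1 < n → g i = i) ∧
      ((g 0 = 0 ∧ g 1 = 1) ∨ (g 0 = 1 ∧ g 1 = 0)) := by
  have h0 : (0:ℕ) + 1 < n := by omega
  have h1 : (1:ℕ) + 1 < n := by omega
  have h2 : (2:ℕ) + 1 < n := by omega
  have h3 : (3:ℕ) + 1 < n := by omega
  -- transfer of adjacency
  have P : ∀ i j, i + 1 < n → j + 1 < n →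
      ((j = i + 1 ∨ i = j + 1 ∨ (i = 0 ∧ j = 2) ∨ (i = 2 ∧ j = 0)) ↔
        (g j = g i + 1 ∨ g i = g j + 1 ∨ (g i = 0 ∧ g j = 2) ∨ (g i = 2 ∧ g j = 0))) := by
    intro i j hi hj
    rw [← nadj_iff hn hi hj, ← nadj_iff hn (hgb i hi) (hgb j hj)]
    rw [not_iff_not]
    exact hcomm i j hi hj
  have p01 : _ := (P 0 1 h0 h1).mp (by omega)
  have p12 : _ := (P 1 2 h1 h2).mp (by omega)
  have p02 : _ := (P 0 2 h0 h2).mp (by omega)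
  have p23 : _ := (P 2 3 h2 h3).mp (by omega)
  have d01 : g 0 ≠ g 1 := fun h => by have := hginj 0 1 h0 h1 h; omega
  have d02 : g 0 ≠ g 2 := fun h => by have := hginj 0 2 h0 h2 h; omega
  have d12 : g 1 ≠ g 2 := fun h => by have := hginj 1 2 h1 h2 h; omega
  have d03 : g 0 ≠ g 3 := fun h => by have := hginj 0 3 h0 h3 h; omega
  have d13 : g 1 ≠ g 3 := fun h => by have := hginj 1 3 h1 h3 h; omega
  have d23 : g 2 ≠ g 3 := fun h => by have := hginj 2 3 h2 h3 h; omega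
  -- the triangle must map to the triangle, with g 2 = 2, g 3 = 3
  have tri : g 0 ≤ 2 ∧ g 1 ≤ 2 ∧ g 2 ≤ 2 := by omega
  have hg2 : g 2 = 2 ∧ g 3 = 3 := by omega
  -- induction along the path
  have path : ∀ k, 2 ≤ k → k + 1 < n → g k = k := by
    intro k
    induction k using Nat.strong_induction_on with
    | _ k ih =>
      intro hk2 hkn
      rcases Nat.lt_or_ge k 4 with hk4 | hk4
      · interval_cases k
        · exact hg2.1
        · exact hg2.2
      · have hkm1 : k - 1 + 1 < n := by omega
        have hkm2 : k - 2 + 1 < n := by omega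
        have e1 : g (k - 1) = k - 1 := ih (k - 1) (by omega) (by omega) hkm1
        have e2 : g (k - 2) = k - 2 := ih (k - 2) (by omega) (by omega) hkm2
        have pk : _ := (P (k - 1) k hkm1 hkn).mp (by omega)
        have dk : g (k - 2) ≠ g k := fun h => by
          have := hginj (k - 2) k hkm2 hkn h; omega
        omega
  refine ⟨path, ?_⟩
  omega


lemma mem_T_iff {n : ℕ} (hn : 5 ≤ n) {T : Set (Equiv.Perm (Fin n))}
    (hT : T = {Equiv.swap ⟨0, by linarith⟩ ⟨1, by linarith⟩,
        Equiv.swap ⟨1, by linarith⟩ ⟨2, by linarith⟩,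
        Equiv.swap ⟨1, by linarith⟩ ⟨3, by linarith⟩} ∪
      {σ | ∃ (i : ℕ) (h : i + 1 < n), 3 ≤ i ∧
        σ = Equiv.swap ⟨i, by linarith⟩ ⟨i + 1, h⟩})
    (s : Equiv.Perm (Fin n)) : s ∈ T ↔ ∃ i, i + 1 < n ∧ s = EE n i := by
  subst hT
  simp only [Set.mem_union, Set.mem_insert_iff, Set.mem_singleton_iff, Set.mem_setOf_eq]
  constructor
  · rintro ((h | h | h) | ⟨i, hb, h3, rfl⟩)
    · exact ⟨0, by omega, by rw [EE_ne_two (by omega) (by omega)]; exact h⟩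
    · exact ⟨1, by omega, by rw [EE_ne_two (by omega) (by omega)]; exact h⟩
    · exact ⟨2, by omega, by rw [EE_two (by omega)]; exact h⟩
    · exact ⟨i, hb, by rw [EE_ne_two hb (by omega)]⟩
  · rintro ⟨i, hb, rfl⟩
    by_cases h2 : i = 2
    · subst h2
      exact Or.inl (Or.inr (Or.inr (by rw [EE_two (by omega)])))
    · rcases Nat.lt_or_ge i 3 with h3 | h3
      · interval_cases i
        · exact Or.inl (Or.inl (by rw [EE_ne_two hb (by omega)]))
        · exact Or.inl (Or.inr (Or.inl (by rw [EE_ne_two hb (by omega)])))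
        · exact absurd rfl h2
      · exact Or.inr ⟨i, hb, h3, by rw [EE_ne_two hb (by omega)]⟩

section TPart
variable {n : ℕ} (hn : 5 ≤ n) {T : Set (Equiv.Perm (Fin n))}
  (hTE : ∀ s, s ∈ T ↔ ∃ i, i + 1 < n ∧ s = EE n i)
include hn hTE

lemma T_swap : ∀ u ∈ T, ∃ x y, x ≠ y ∧ u = Equiv.swap x y := by
  intro u hu
  obtain ⟨i, hb, rfl⟩ := (hTE u).mp hu
  obtain ⟨x, y, hxy, he, _⟩ := EE_form n hb
  exact ⟨x, y, hxy, he⟩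

lemma T_inv : ∀ s ∈ T, s⁻¹ ∈ T := by
  intro s hs
  obtain ⟨x, y, hxy, rfl⟩ := T_swap hn hTE s hs
  rwa [Equiv.swap_inv]

lemma one_not_mem_T : (1 : Equiv.Perm (Fin n)) ∉ T := by
  intro h
  obtain ⟨x, y, hxy, he⟩ := T_swap hn hTE 1 h
  have := congrArg (fun f => f x) he
  simp [Equiv.swap_apply_left] at this
  exact hxy this

lemma EE_mem_T : ∀ i, i + 1 < n → EE n i ∈ T := by
  intro i hb
  exact (hTE _).mpr ⟨i, hb, rfl⟩

lemma adjacent_swap_mem_closure :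
    ∀ i (h : i + 1 < n), Equiv.swap (⟨i, by linarith⟩ : Fin n) ⟨i + 1, h⟩ ∈ Subgroup.closure T := by
  intro i h
  by_cases h2 : i = 2
  · subst h2
    have hE1 : EE n 1 ∈ Subgroup.closure T :=
      Subgroup.subset_closure (EE_mem_T hn hTE 1 (by omega))
    have hE2 : EE n 2 ∈ Subgroup.closure T :=
      Subgroup.subset_closure (EE_mem_T hn hTE 2 (by omega))
    have key : Equiv.swap (⟨2, by omega⟩ : Fin n) ⟨3, h⟩ = EE n 2 * EE n 1 * EE n 2 := by
      rw [EE_two (by omega), EE_ne_two (n := n) (i := 1) (by omega) (by omega)]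
      have := Equiv.swap_apply_apply (Equiv.swap (⟨1, by omega⟩ : Fin n) ⟨3, by omega⟩)
        (⟨1, by omega⟩ : Fin n) ⟨2, by omega⟩
      rw [Equiv.swap_apply_left,
        Equiv.swap_apply_of_ne_of_ne (mk_ne (by omega)) (mk_ne (by omega)),
        Equiv.swap_inv] at this
      rw [← this]
      exact Equiv.swap_comm _ _
    rw [key]
    exact Subgroup.mul_mem _ (Subgroup.mul_mem _ hE2 hE1) hE2
  · have : Equiv.swap (⟨i, by omega⟩ : Fin n) ⟨i + 1, h⟩ = EE n i := (EE_ne_two h h2).symm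
    rw [this]
    exact Subgroup.subset_closure (EE_mem_T hn hTE i h)

lemma swap_mem_closure :
    ∀ (d a : ℕ) (h : a + d + 1 < n),
      Equiv.swap (⟨a, by omega⟩ : Fin n) ⟨a + d + 1, h⟩ ∈ Subgroup.closure T := by
  intro d
  induction d with
  | zero => intro a h; exact adjacent_swap_mem_closure hn hTE a h
  | succ d ih =>
    intro a h
    have hs : Equiv.swap (⟨a + d + 1, by omega⟩ : Fin n) ⟨a + d + 2, by omega⟩ ∈
        Subgroup.closure T := adjacent_swap_mem_closure hn hTE (a + d + 1) (by omega)
    have hprev := ih a (by omega)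
    have key : Equiv.swap (⟨a, by omega⟩ : Fin n) ⟨a + (d + 1) + 1, h⟩ =
        Equiv.swap (⟨a + d + 1, by omega⟩ : Fin n) ⟨a + d + 2, by omega⟩ *
          Equiv.swap (⟨a, by omega⟩ : Fin n) ⟨a + d + 1, by omega⟩ *
          Equiv.swap (⟨a + d + 1, by omega⟩ : Fin n) ⟨a + d + 2, by omega⟩ := by
      have := Equiv.swap_apply_apply
        (Equiv.swap (⟨a + d + 1, by omega⟩ : Fin n) ⟨a + d + 2, by omega⟩)
        (⟨a, by omega⟩ : Fin n) ⟨a + d + 1, by omega⟩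
      rw [Equiv.swap_apply_of_ne_of_ne (mk_ne (by omega)) (mk_ne (by omega)),
        Equiv.swap_apply_left, Equiv.swap_inv] at this
      have h2 : (⟨a + d + 2, by omega⟩ : Fin n) = ⟨a + (d + 1) + 1, h⟩ := by
        apply Fin.ext; simp; omega
      rw [h2] at this
      exact this
    rw [key]
    exact Subgroup.mul_mem _ (Subgroup.mul_mem _ hs hprev) hs

lemma closure_T_top : Subgroup.closure T = ⊤ := by
  have hle : Subgroup.closure {σ : Equiv.Perm (Fin n) | σ.IsSwap} ≤ Subgroup.closure T := by
    apply Subgroup.closure_le _ |>.mpr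
    rintro σ ⟨x, y, hxy, rfl⟩
    rcases Nat.lt_or_ge x.val y.val with hlt | hge
    · have key : Equiv.swap x y =
          Equiv.swap (⟨x.val, x.isLt⟩ : Fin n) ⟨x.val + (y.val - x.val - 1) + 1, by omega⟩ := by
        congr 1
        all_goals (apply Fin.ext; simp; omega)
      rw [key]
      exact swap_mem_closure hn hTE (y.val - x.val - 1) x.val (by omega)
    · have hlt : y.val < x.val := by
        rcases Nat.lt_or_ge y.val x.val with h | h
        · exact h
        · exact absurd (Fin.ext (by omega)) hxy
      have key : Equiv.swap x y =
          Equiv.swap (⟨y.val, y.isLt⟩ : Fin n) ⟨y.val + (x.val - y.val - 1) + 1, by omega⟩ := by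
        rw [Equiv.swap_comm]
        congr 1
        all_goals (apply Fin.ext; simp; omega)
      rw [key]
      exact swap_mem_closure hn hTE (x.val - y.val - 1) y.val (by omega)
  rw [← top_le_iff, ← Equiv.Perm.closure_isSwap]
  exact hle


end TPart

section AbstractTable
variable {α : Type*} [DecidableEq α]
variable {p0 p1 p2 p3 : α}
  (h01 : p0 ≠ p1) (h02 : p0 ≠ p2) (h03 : p0 ≠ p3)
  (h12 : p1 ≠ p2) (h13 : p1 ≠ p3) (h23 : p2 ≠ p3)
include h01 h02 h03 h12 h13 h23

lemma swap_conj_swap (u v x y : α) (huv : u ≠ v) :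
    Equiv.swap u v * Equiv.swap x y * Equiv.swap u v =
      Equiv.swap (Equiv.swap u v x) (Equiv.swap u v y) := by
  have := Equiv.swap_apply_apply (Equiv.swap u v) x y
  rw [Equiv.swap_inv] at this
  exact this.symm

lemma ACA : Equiv.swap p0 p1 * Equiv.swap p1 p3 * Equiv.swap p0 p1 = Equiv.swap p0 p3 := by
  rw [swap_conj_swap h01 h02 h03 h12 h13 h23 _ _ _ _ h01, Equiv.swap_apply_right,
    Equiv.swap_apply_of_ne_of_ne h03.symm h13.symm]

lemma CAC : Equiv.swap p1 p3 * Equiv.swap p0 p1 * Equiv.swap p1 p3 = Equiv.swap p0 p3 := by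
  rw [swap_conj_swap h01 h02 h03 h12 h13 h23 _ _ _ _ h13, 
    Equiv.swap_apply_of_ne_of_ne h01 h03, Equiv.swap_apply_left]

lemma BCB : Equiv.swap p1 p2 * Equiv.swap p1 p3 * Equiv.swap p1 p2 = Equiv.swap p2 p3 := by
  rw [swap_conj_swap h01 h02 h03 h12 h13 h23 _ _ _ _ h12, Equiv.swap_apply_left,
    Equiv.swap_apply_of_ne_of_ne h13.symm h23.symm]

lemma CBC : Equiv.swap p1 p3 * Equiv.swap p1 p2 * Equiv.swap p1 p3 = Equiv.swap p2 p3 := by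
  rw [swap_conj_swap h01 h02 h03 h12 h13 h23 _ _ _ _ h13, Equiv.swap_apply_left,
    Equiv.swap_apply_of_ne_of_ne h12.symm h23]
  exact Equiv.swap_comm _ _

lemma tblA : Equiv.swap p0 p1 * Equiv.swap p1 p3 * Equiv.swap p0 p1 =
    Equiv.swap p1 p3 * Equiv.swap p0 p1 * Equiv.swap p1 p3 := by
  rw [ACA h01 h02 h03 h12 h13 h23, CAC h01 h02 h03 h12 h13 h23]

lemma tblB : Equiv.swap p1 p2 * Equiv.swap p1 p3 * Equiv.swap p1 p2 =
    Equiv.swap p1 p3 * Equiv.swap p1 p2 * Equiv.swap p1 p3 := by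
  rw [BCB h01 h02 h03 h12 h13 h23, CBC h01 h02 h03 h12 h13 h23]

-- evaluations of the two 4-cycles
lemma ACB_p2 : (Equiv.swap p0 p1 * Equiv.swap p1 p3 * Equiv.swap p1 p2) p2 = p3 := by
  simp only [Equiv.Perm.mul_apply]
  rw [Equiv.swap_apply_right, Equiv.swap_apply_left,
    Equiv.swap_apply_of_ne_of_ne h03.symm h13.symm]

lemma ACB_p0 : (Equiv.swap p0 p1 * Equiv.swap p1 p3 * Equiv.swap p1 p2) p0 = p1 := by
  simp only [Equiv.Perm.mul_apply]
  rw [Equiv.swap_apply_of_ne_of_ne h01 h02,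
    Equiv.swap_apply_of_ne_of_ne h01 h03, Equiv.swap_apply_left]

lemma BCA_p2 : (Equiv.swap p1 p2 * Equiv.swap p1 p3 * Equiv.swap p0 p1) p2 = p1 := by
  simp only [Equiv.Perm.mul_apply]
  rw [Equiv.swap_apply_of_ne_of_ne h02.symm h12.symm,
    Equiv.swap_apply_of_ne_of_ne h12.symm h23, Equiv.swap_apply_right]

lemma BCA_p0 : (Equiv.swap p1 p2 * Equiv.swap p1 p3 * Equiv.swap p0 p1) p0 = p3 := by
  simp only [Equiv.Perm.mul_apply]
  rw [Equiv.swap_apply_left, Equiv.swap_apply_left,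
    Equiv.swap_apply_of_ne_of_ne h13.symm h23.symm]

lemma tblne :
    (Equiv.swap p0 p1 * Equiv.swap p1 p3 * Equiv.swap p0 p1 ≠
      Equiv.swap p1 p3 * Equiv.swap p1 p2 * Equiv.swap p1 p3) ∧
    (Equiv.swap p0 p1 * Equiv.swap p1 p3 * Equiv.swap p1 p2 ≠
      Equiv.swap p1 p3 * Equiv.swap p0 p1 * Equiv.swap p1 p3) ∧
    (Equiv.swap p0 p1 * Equiv.swap p1 p3 * Equiv.swap p1 p2 ≠
      Equiv.swap p1 p3 * Equiv.swap p1 p2 * Equiv.swap p1 p3) ∧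
    (Equiv.swap p1 p2 * Equiv.swap p1 p3 * Equiv.swap p0 p1 ≠
      Equiv.swap p1 p3 * Equiv.swap p0 p1 * Equiv.swap p1 p3) ∧
    (Equiv.swap p1 p2 * Equiv.swap p1 p3 * Equiv.swap p0 p1 ≠
      Equiv.swap p1 p3 * Equiv.swap p1 p2 * Equiv.swap p1 p3) ∧
    (Equiv.swap p1 p2 * Equiv.swap p1 p3 * Equiv.swap p1 p2 ≠
      Equiv.swap p1 p3 * Equiv.swap p0 p1 * Equiv.swap p1 p3) := by
  refine ⟨?_, ?_, ?_, ?_, ?_, ?_⟩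
  · rw [ACA h01 h02 h03 h12 h13 h23, CBC h01 h02 h03 h12 h13 h23]
    rw [Ne, swap_eq_swap_iff h03]
    push_neg
    exact ⟨fun he => absurd he h02, fun he => absurd he h03⟩
  · intro h
    have := congrArg (fun f => f p2) h
    simp only [ACB_p2 h01 h02 h03 h12 h13 h23] at this
    rw [CAC h01 h02 h03 h12 h13 h23] at this
    rw [Equiv.swap_apply_of_ne_of_ne h02.symm h23] at this
    exact h23 this.symm
  · intro h
    have := congrArg (fun f => f p0) h
    simp only [ACB_p0 h01 h02 h03 h12 h13 h23] at this
    rw [CBC h01 h02 h03 h12 h13 h23] at this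
    rw [Equiv.swap_apply_of_ne_of_ne h02 h03] at this
    exact h01 this.symm
  · intro h
    have := congrArg (fun f => f p2) h
    simp only [BCA_p2 h01 h02 h03 h12 h13 h23] at this
    rw [CAC h01 h02 h03 h12 h13 h23] at this
    rw [Equiv.swap_apply_of_ne_of_ne h02.symm h23] at this
    exact h12 this
  · intro h
    have := congrArg (fun f => f p0) h
    simp only [BCA_p0 h01 h02 h03 h12 h13 h23] at this
    rw [CBC h01 h02 h03 h12 h13 h23] at this
    rw [Equiv.swap_apply_of_ne_of_ne h02 h03] at this
    exact h03 this.symm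
  · rw [BCB h01 h02 h03 h12 h13 h23, CAC h01 h02 h03 h12 h13 h23]
    rw [Ne, swap_eq_swap_iff h23]
    push_neg
    exact ⟨fun he => absurd he.symm h02, fun he => absurd he h23⟩

-- conjugation by (p0 p2)
lemma conj02_A : Equiv.swap p0 p2 * Equiv.swap p0 p1 * Equiv.swap p0 p2 = Equiv.swap p1 p2 := by
  rw [swap_conj_swap h01 h02 h03 h12 h13 h23 _ _ _ _ h02, Equiv.swap_apply_left,
    Equiv.swap_apply_of_ne_of_ne h01.symm h12]
  exact Equiv.swap_comm _ _

lemma conj02_B : Equiv.swap p0 p2 * Equiv.swap p1 p2 * Equiv.swap p0 p2 = Equiv.swap p0 p1 := by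
  rw [swap_conj_swap h01 h02 h03 h12 h13 h23 _ _ _ _ h02,
    Equiv.swap_apply_of_ne_of_ne h01.symm h12, Equiv.swap_apply_right]
  exact Equiv.swap_comm _ _

lemma conj02_C : Equiv.swap p0 p2 * Equiv.swap p1 p3 * Equiv.swap p0 p2 = Equiv.swap p1 p3 := by
  rw [swap_conj_swap h01 h02 h03 h12 h13 h23 _ _ _ _ h02,
    Equiv.swap_apply_of_ne_of_ne h01.symm h12, Equiv.swap_apply_of_ne_of_ne h03.symm h23.symm]

end AbstractTable

lemma conj_swap_fix {α : Type*} [DecidableEq α] {p0 p2 x y : α} (hp : p0 ≠ p2)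
    (hx0 : x ≠ p0) (hx2 : x ≠ p2) (hy0 : y ≠ p0) (hy2 : y ≠ p2) :
    Equiv.swap p0 p2 * Equiv.swap x y * Equiv.swap p0 p2 = Equiv.swap x y := by
  have := Equiv.swap_apply_apply (Equiv.swap p0 p2) x y
  rw [Equiv.swap_inv] at this
  rw [← this, Equiv.swap_apply_of_ne_of_ne hx0 hx2, Equiv.swap_apply_of_ne_of_ne hy0 hy2]



section Psi
variable {n : ℕ} (hn : 5 ≤ n) {T : Set (Equiv.Perm (Fin n))}
  (hTE : ∀ s, s ∈ T ↔ ∃ i, i + 1 < n ∧ s = EE n i)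

lemma mem_dAut {V : Type*} {adj : V → V → Prop} {σ : Equiv.Perm V} :
    σ ∈ dAut adj ↔ ∀ u v : V, adj (σ u) (σ v) ↔ adj u v := Iff.rfl

lemma cayAdj_iff {G : Type*} [Group G] (S : Set G) (u v : G) :
    cayAdj G S u v ↔ v * u⁻¹ ∈ S := Iff.rfl

include hn hTE

lemma T_invol : ∀ s ∈ T, s * s = 1 := by
  intro s hs
  obtain ⟨x, y, _, rfl⟩ := T_swap hn hTE s hs
  exact Equiv.swap_mul_self _ _

lemma nbr_mem {ψ : Equiv.Perm (Equiv.Perm (Fin n))}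
    (hψ : ψ ∈ dAut (cayAdj (Equiv.Perm (Fin n)) T)) (g : Equiv.Perm (Fin n))
    {s : Equiv.Perm (Fin n)} (hs : s ∈ T) : ψ (s * g) * (ψ g)⁻¹ ∈ T := by
  have h := (mem_dAut.mp hψ g (s * g)).mpr
  rw [cayAdj_iff, cayAdj_iff] at h
  exact h (by rw [mul_inv_cancel_right]; exact hs)

lemma commPres {ψ : Equiv.Perm (Equiv.Perm (Fin n))}
    (hψ : ψ ∈ dAut (cayAdj (Equiv.Perm (Fin n)) T)) (g : Equiv.Perm (Fin n))
    {s t : Equiv.Perm (Fin n)} (hs : s ∈ T) (ht : t ∈ T) (hst : s ≠ t)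
    (hc : Commute s t) :
    Commute (ψ (s * g) * (ψ g)⁻¹) (ψ (t * g) * (ψ g)⁻¹) := by
  set πs := ψ (s * g) * (ψ g)⁻¹ with hπs
  set πt := ψ (t * g) * (ψ g)⁻¹ with hπt
  have hπsT : πs ∈ T := nbr_mem hn hTE hψ g hs
  have hπtT : πt ∈ T := nbr_mem hn hTE hψ g ht
  have hπne : πs ≠ πt := by
    intro h
    apply hst
    have : ψ (s * g) = ψ (t * g) := by
      have := congrArg (fun w => w * ψ g) h
      simpa [hπs, hπt, mul_assoc] using this
    have := ψ.injective this
    exact mul_right_cancel this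
  by_contra hnc
  -- get the representation of the noncommuting pair
  obtain ⟨is, hbs, hse⟩ := (hTE πs).mp hπsT
  obtain ⟨it, hbt, hte⟩ := (hTE πt).mp hπtT
  have hine : is ≠ it := fun h => hπne (by rw [hse, hte, h])
  have hadj : it = is + 1 ∨ is = it + 1 ∨ (is = 0 ∧ it = 2) ∨ (is = 2 ∧ it = 0) := by
    rw [← nadj_iff hn hbs hbt]
    rw [hse, hte] at hnc
    exact hnc
  obtain ⟨a, b, c, hab, hbc, hac, he1, he2, hcl⟩ := adj_rep hn hbs hbt hadj
  -- the common neighbour x = t * (s * g)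
  set x := t * (s * g) with hx
  have hadj1 : cayAdj (Equiv.Perm (Fin n)) T (s * g) x := by
    rw [cayAdj_iff, hx, mul_inv_cancel_right]
    exact ht
  have hadj2 : cayAdj (Equiv.Perm (Fin n)) T (t * g) x := by
    rw [cayAdj_iff, hx]
    have heq : t * (s * g) * (t * g)⁻¹ = s := by
      calc t * (s * g) * (t * g)⁻¹ = t * s * t⁻¹ := by rw [mul_inv_rev]; group
        _ = s * t * t⁻¹ := by rw [← hc.eq]
        _ = s := by rw [mul_inv_cancel_right]
    rw [heq]
    exact hs
  have hp' : ψ x * (ψ (s * g))⁻¹ ∈ T := by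
    have h := (mem_dAut.mp hψ (s * g) x).mpr hadj1
    rwa [cayAdj_iff] at h
  have hq' : ψ x * (ψ (t * g))⁻¹ ∈ T := by
    have h := (mem_dAut.mp hψ (t * g) x).mpr hadj2
    rwa [cayAdj_iff] at h
  set p' := ψ x * (ψ (s * g))⁻¹ with hp'def
  set q' := ψ x * (ψ (t * g))⁻¹ with hq'def
  have h1 : ψ (s * g) = πs * ψ g := by rw [hπs, inv_mul_cancel_right]
  have h2 : ψ (t * g) = πt * ψ g := by rw [hπt, inv_mul_cancel_right]
  have hπtinv : πt * πt = 1 := T_invol hn hTE πt hπtT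
  have hπt_inv : πt⁻¹ = πt := by
    rw [← mul_one πt⁻¹, ← hπtinv, ← mul_assoc, inv_mul_cancel, one_mul]
  have hrel : q' = p' * πs * πt := by
    have e1 : p' * πs = ψ x * (ψ g)⁻¹ := by
      rw [hp'def, h1, mul_inv_rev]
      simp [mul_assoc]
    rw [e1, hq'def, h2, mul_inv_rev, hπt_inv, ← mul_assoc]
  have hp'ne : p' ≠ πs := by
    intro h
    have hπsinv : πs * πs = 1 := T_invol hn hTE πs hπsT
    have hxinv : ψ x * (ψ g)⁻¹ = 1 := by
      have hx2 : ψ x = πs * ψ (s * g) := by rw [← h, hp'def, inv_mul_cancel_right]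
      rw [hx2, h1, ← mul_assoc, hπsinv, one_mul, mul_inv_cancel]
    have hxg : x = g := by
      have hxg2 : ψ x = ψ g := by
        have := congrArg (fun w => w * ψ g) hxinv
        simpa [mul_assoc] using this
      exact ψ.injective hxg2
    rw [hx] at hxg
    apply hst
    have hts : t * s = 1 := by
      have := congrArg (fun w => w * g⁻¹) hxg
      simpa [mul_assoc] using this
    have htinv : t * t = 1 := T_invol hn hTE t ht
    calc s = (t * t) * s := by rw [htinv, one_mul]
      _ = t * (t * s) := by rw [mul_assoc]
      _ = t := by rw [hts, mul_one]
  have hclass2 : ∀ u ∈ T, (∀ z : Fin n, z ≠ a → z ≠ b → z ≠ c → u z = z) → u = πs ∨ u = πt := by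
    intro u hu hufix
    obtain ⟨iu, hbu, hue⟩ := (hTE u).mp hu
    rcases hcl iu hbu (by rw [← hue]; exact hufix) with h | h
    · left; rw [hue, h, ← hse]
    · right; rw [hue, h, ← hte]
  exact A2 (T := T) (T_swap hn hTE) hπsT hπtT hab hbc hac
    (by rw [hse, he1]) (by rw [hte, he2]) hclass2 hp' hp'ne
    (by rw [← hrel]; exact hq')

end Psi


section Psi2
variable {n : ℕ} (hn : 5 ≤ n) {T : Set (Equiv.Perm (Fin n))}
  (hTE : ∀ s, s ∈ T ↔ ∃ i, i + 1 < n ∧ s = EE n i)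
include hn hTE

lemma local_struct {ψ : Equiv.Perm (Equiv.Perm (Fin n))}
    (hψ : ψ ∈ dAut (cayAdj (Equiv.Perm (Fin n)) T)) (g : Equiv.Perm (Fin n)) :
    (∀ i, 2 ≤ i → i + 1 < n → ψ (EE n i * g) = EE n i * ψ g) ∧
      ((ψ (EE n 0 * g) = EE n 0 * ψ g ∧ ψ (EE n 1 * g) = EE n 1 * ψ g) ∨
        (ψ (EE n 0 * g) = EE n 1 * ψ g ∧ ψ (EE n 1 * g) = EE n 0 * ψ g)) := by
  have hψi : ψ⁻¹ ∈ dAut (cayAdj (Equiv.Perm (Fin n)) T) :=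
    (dAut (cayAdj (Equiv.Perm (Fin n)) T)).inv_mem hψ
  set π : ℕ → Equiv.Perm (Fin n) := fun i => ψ (EE n i * g) * (ψ g)⁻¹ with hπ
  have hπT : ∀ i, i + 1 < n → π i ∈ T := fun i hi =>
    nbr_mem hn hTE hψ g (EE_mem_T hn hTE i hi)
  have hchoice : ∀ i, i + 1 < n → ∃ j, j + 1 < n ∧ π i = EE n j := fun i hi =>
    (hTE (π i)).mp (hπT i hi)
  classical
  set gI : ℕ → ℕ := fun i => if hi : i + 1 < n then (hchoice i hi).choose else 0 with hgI
  have hgb : ∀ i, i + 1 < n → gI i + 1 < n := by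
    intro i hi
    rw [hgI]; simp only [dif_pos hi]
    exact (hchoice i hi).choose_spec.1
  have hgeq : ∀ i (hi : i + 1 < n), π i = EE n (gI i) := by
    intro i hi
    rw [hgI]; simp only [dif_pos hi]
    exact (hchoice i hi).choose_spec.2
  have hπeq : ∀ i (hi : i + 1 < n), ψ (EE n i * g) = π i * ψ g := by
    intro i hi
    rw [hπ]
    simp only [inv_mul_cancel_right]
  have hginj : ∀ i j, i + 1 < n → j + 1 < n → gI i = gI j → i = j := by
    intro i j hi hj h
    have : π i = π j := by rw [hgeq i hi, hgeq j hj, h]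
    have h2 : ψ (EE n i * g) = ψ (EE n j * g) := by
      have := congrArg (fun w => w * ψ g) this
      simp only [hπ, inv_mul_cancel_right] at this
      exact this
    have h3 := mul_right_cancel (ψ.injective h2)
    exact EE_inj hi hj h3
  have hcomm : ∀ i j, i + 1 < n → j + 1 < n →
      (Commute (EE n i) (EE n j) ↔ Commute (EE n (gI i)) (EE n (gI j))) := by
    intro i j hi hj
    by_cases hij : i = j
    · subst hij
      exact iff_of_true (Commute.refl _) (Commute.refl _)
    constructor
    · intro hc
      have h2 : Commute (π i) (π j) := commPres hn hTE hψ g (EE_mem_T hn hTE i hi)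
        (EE_mem_T hn hTE j hj) (fun h => hij (EE_inj hi hj h)) hc
      rwa [hgeq i hi, hgeq j hj] at h2
    · intro hc
      have hWi : ψ⁻¹ (π i * ψ g) * (ψ⁻¹ (ψ g))⁻¹ = EE n i := by
        rw [← hπeq i hi]
        simp
      have hWj : ψ⁻¹ (π j * ψ g) * (ψ⁻¹ (ψ g))⁻¹ = EE n j := by
        rw [← hπeq j hj]
        simp
      have hπij : π i ≠ π j := by
        intro h
        apply hij
        apply hginj i j hi hj
        have := congrArg (fun w => w * (ψ g)⁻¹)
          (congrArg ψ.symm (congrArg (fun w => w * ψ g) h))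
        apply EE_inj (hgb i hi) (hgb j hj)
        rw [← hgeq i hi, ← hgeq j hj, h]
      have hcp := commPres hn hTE hψi (ψ g) (hπT i hi) (hπT j hj) hπij
        (by rwa [hgeq i hi, hgeq j hj])
      simp only [show ∀ x, ψ⁻¹ (ψ x) = x from fun x => ψ.symm_apply_apply x] at hcp
      have e1 : ψ⁻¹ (π i * ψ g) = EE n i * g := by
        rw [← hπeq i hi]; exact ψ.symm_apply_apply _
      have e2 : ψ⁻¹ (π j * ψ g) = EE n j * g := by
        rw [← hπeq j hj]; exact ψ.symm_apply_apply _
      rw [e1, e2] at hcp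
      simpa [mul_assoc] using hcp
  obtain ⟨hfix, hswap01⟩ := L3 hn gI hgb hginj hcomm
  constructor
  · intro i h2i hi
    rw [hπeq i hi, hgeq i hi, hfix i h2i hi]
  · have h0 : (0:ℕ) + 1 < n := by omega
    have h1 : (1:ℕ) + 1 < n := by omega
    rcases hswap01 with ⟨ha, hb⟩ | ⟨ha, hb⟩
    · left
      constructor
      · rw [hπeq 0 h0, hgeq 0 h0, ha]
      · rw [hπeq 1 h1, hgeq 1 h1, hb]
    · right
      constructor
      · rw [hπeq 0 h0, hgeq 0 h0, ha]
      · rw [hπeq 1 h1, hgeq 1 h1, hb]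

end Psi2


section KeyThm
variable {n : ℕ} (hn : 5 ≤ n) {T : Set (Equiv.Perm (Fin n))}
  (hTE : ∀ s, s ∈ T ↔ ∃ i, i + 1 < n ∧ s = EE n i)

omit hTE in
include hn in
lemma EE0_eq : EE n 0 = Equiv.swap ⟨0, by linarith⟩ ⟨1, by linarith⟩ :=
  EE_ne_two (by omega) (by omega)

omit hTE in
include hn in
lemma EE1_eq : EE n 1 = Equiv.swap ⟨1, by linarith⟩ ⟨2, by linarith⟩ :=
  EE_ne_two (by omega) (by omega)

omit hTE in
include hn in
lemma EE2_eq : EE n 2 = Equiv.swap ⟨1, by linarith⟩ ⟨3, by linarith⟩ := EE_two (by omega)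

omit hTE in
include hn in
lemma EE0_ne_EE1 : EE n 0 ≠ EE n 1 := by
  rw [EE0_eq hn, EE1_eq hn, Ne, swap_eq_swap_iff (mk_ne (by omega))]
  push_neg
  refine ⟨fun h => absurd h (mk_ne (by omega)), fun h => absurd h (mk_ne (by omega))⟩

omit hTE in
include hn in
lemma tblA' : EE n 0 * EE n 2 * EE n 0 = EE n 2 * EE n 0 * EE n 2 := by
  rw [EE0_eq hn, EE2_eq hn]
  exact tblA (p2 := ⟨2, by omega⟩) (mk_ne (by omega)) (mk_ne (by omega)) (mk_ne (by omega))
    (mk_ne (by omega)) (mk_ne (by omega)) (mk_ne (by omega))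

omit hTE in
include hn in
lemma tblB' : EE n 1 * EE n 2 * EE n 1 = EE n 2 * EE n 1 * EE n 2 := by
  rw [EE1_eq hn, EE2_eq hn]
  exact tblB (p0 := ⟨0, by omega⟩) (mk_ne (by omega)) (mk_ne (by omega)) (mk_ne (by omega))
    (mk_ne (by omega)) (mk_ne (by omega)) (mk_ne (by omega))

omit hTE in
include hn in
lemma tblne' :
    (EE n 0 * EE n 2 * EE n 0 ≠ EE n 2 * EE n 1 * EE n 2) ∧
    (EE n 0 * EE n 2 * EE n 1 ≠ EE n 2 * EE n 0 * EE n 2) ∧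
    (EE n 0 * EE n 2 * EE n 1 ≠ EE n 2 * EE n 1 * EE n 2) ∧
    (EE n 1 * EE n 2 * EE n 0 ≠ EE n 2 * EE n 0 * EE n 2) ∧
    (EE n 1 * EE n 2 * EE n 0 ≠ EE n 2 * EE n 1 * EE n 2) ∧
    (EE n 1 * EE n 2 * EE n 1 ≠ EE n 2 * EE n 0 * EE n 2) := by
  rw [EE0_eq hn, EE1_eq hn, EE2_eq hn]
  exact tblne (mk_ne (by omega)) (mk_ne (by omega)) (mk_ne (by omega))
    (mk_ne (by omega)) (mk_ne (by omega)) (mk_ne (by omega))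

omit hTE in
include hn in
lemma commute_EEj_EE0 {j : ℕ} (hj3 : 3 ≤ j) (hj : j + 1 < n) :
    Commute (EE n j) (EE n 0) := commute_EE hj (by omega) (by omega)

omit hTE in
include hn in
lemma commute_EEj_EE1 {j : ℕ} (hj3 : 3 ≤ j) (hj : j + 1 < n) :
    Commute (EE n j) (EE n 1) := commute_EE hj (by omega) (by omega)

include hn hTE

theorem key {ψ : Equiv.Perm (Equiv.Perm (Fin n))}
    (hψ : ψ ∈ dAut (cayAdj (Equiv.Perm (Fin n)) T)) (hψ1 : ψ 1 = 1)
    (hfix0 : ψ (EE n 0) = EE n 0) (hfix1 : ψ (EE n 1) = EE n 1) : ψ = 1 := by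
  have h0b : (0:ℕ) + 1 < n := by omega
  have h1b : (1:ℕ) + 1 < n := by omega
  have h2b : (2:ℕ) + 1 < n := by omega
  have K1 : ∀ i, 2 ≤ i → i + 1 < n → ∀ g, ψ (EE n i * g) = EE n i * ψ g :=
    fun i h2 hi g => (local_struct hn hTE hψ g).1 i h2 hi
  set W : Equiv.Perm (Fin n) → Prop := fun g =>
    ψ (EE n 0 * g) = EE n 0 * ψ g ∧ ψ (EE n 1 * g) = EE n 1 * ψ g with hWdef
  set B : Equiv.Perm (Fin n) → Prop := fun g =>
    ψ (EE n 0 * g) = EE n 1 * ψ g ∧ ψ (EE n 1 * g) = EE n 0 * ψ g with hBdef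
  have dich : ∀ g, W g ∨ B g := fun g => (local_struct hn hTE hψ g).2
  have notboth : ∀ g, B g → ¬ W g := by
    intro g hB hW
    exact EE0_ne_EE1 hn (mul_right_cancel (hW.1.symm.trans hB.1))
  have EQ1 : ∀ g, (W (EE n 2 * g) ↔ W g) ∧ (W (EE n 2 * (EE n 0 * g)) ↔ W g) := by
    intro g
    have heq : EE n 0 * (EE n 2 * (EE n 0 * g)) = EE n 2 * (EE n 0 * (EE n 2 * g)) := by
      simp only [← mul_assoc]
      rw [tblA' hn]
    have master : ψ (EE n 0 * (EE n 2 * (EE n 0 * g))) =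
        ψ (EE n 2 * (EE n 0 * (EE n 2 * g))) := by rw [heq]
    have hRK : ψ (EE n 2 * (EE n 0 * (EE n 2 * g))) =
        EE n 2 * ψ (EE n 0 * (EE n 2 * g)) := K1 2 le_rfl h2b _
    have hinK : ψ (EE n 2 * (EE n 0 * g)) = EE n 2 * ψ (EE n 0 * g) := K1 2 le_rfl h2b _
    have hzK : ψ (EE n 2 * g) = EE n 2 * ψ g := K1 2 le_rfl h2b g
    rcases dich (EE n 2 * (EE n 0 * g)) with hX | hX <;> rcases dich g with hY | hY <;>
      rcases dich (EE n 2 * g) with hZ | hZ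
    all_goals (
      first
      | (exact ⟨iff_of_true hZ hY, iff_of_true hX hY⟩)
      | (exact ⟨iff_of_false (notboth _ hZ) (notboth _ hY),
          iff_of_false (notboth _ hX) (notboth _ hY)⟩)
      | (exfalso
         have l := master
         rw [hX.1, hinK, hY.1, hRK, hZ.1, hzK] at l
         simp only [← mul_assoc] at l
         have l2 := mul_right_cancel l
         first
         | exact (tblne' hn).1 l2
         | exact (tblne' hn).2.1 l2
         | exact (tblne' hn).2.2.1 l2
         | exact (tblne' hn).2.2.2.1 l2
         | exact (tblne' hn).2.2.2.2.1 l2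
         | exact (tblne' hn).2.2.2.2.2 l2))
  have EQ2 : ∀ g, W (EE n 2 * (EE n 1 * g)) ↔ W g := by
    intro g
    have heq : EE n 1 * (EE n 2 * (EE n 1 * g)) = EE n 2 * (EE n 1 * (EE n 2 * g)) := by
      simp only [← mul_assoc]
      rw [tblB' hn]
    have master : ψ (EE n 1 * (EE n 2 * (EE n 1 * g))) =
        ψ (EE n 2 * (EE n 1 * (EE n 2 * g))) := by rw [heq]
    have hRK : ψ (EE n 2 * (EE n 1 * (EE n 2 * g))) =
        EE n 2 * ψ (EE n 1 * (EE n 2 * g)) := K1 2 le_rfl h2b _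
    have hinK : ψ (EE n 2 * (EE n 1 * g)) = EE n 2 * ψ (EE n 1 * g) := K1 2 le_rfl h2b _
    have hzK : ψ (EE n 2 * g) = EE n 2 * ψ g := K1 2 le_rfl h2b g
    rcases dich (EE n 2 * (EE n 1 * g)) with hX | hX <;> rcases dich g with hY | hY <;>
      rcases dich (EE n 2 * g) with hZ | hZ
    all_goals (
      first
      | (exact iff_of_true hX hY)
      | (exact iff_of_false (notboth _ hX) (notboth _ hY))
      | (exfalso
         have l := master
         rw [hX.2, hinK, hY.2, hRK, hZ.2, hzK] at l
         simp only [← mul_assoc] at l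
         have l2 := mul_right_cancel l
         first
         | exact (tblne' hn).1 l2
         | exact (tblne' hn).2.1 l2
         | exact (tblne' hn).2.2.1 l2
         | exact (tblne' hn).2.2.2.1 l2
         | exact (tblne' hn).2.2.2.2.1 l2
         | exact (tblne' hn).2.2.2.2.2 l2))
  have EQ3 : ∀ j, 3 ≤ j → j + 1 < n → ∀ g, W (EE n j * g) ↔ W g := by
    intro j hj3 hj g
    have hcomm0 := commute_EEj_EE0 hn hj3 hj
    have heq : EE n 0 * (EE n j * g) = EE n j * (EE n 0 * g) := by
      simp only [← mul_assoc]
      rw [← hcomm0.eq]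
    have master : ψ (EE n 0 * (EE n j * g)) = ψ (EE n j * (EE n 0 * g)) := by rw [heq]
    have hjK : ∀ h, ψ (EE n j * h) = EE n j * ψ h := K1 j (by omega) hj
    rcases dich (EE n j * g) with hA | hA <;> rcases dich g with hY | hY
    · exact iff_of_true hA hY
    · exfalso
      have l := master
      rw [hA.1, hjK, hjK, hY.1] at l
      simp only [← mul_assoc] at l
      have l2 := mul_right_cancel l
      rw [← hcomm0.eq] at l2
      exact EE0_ne_EE1 hn (mul_left_cancel l2)
    · exfalso
      have l := master
      rw [hA.1, hjK, hjK, hY.1] at l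
      simp only [← mul_assoc] at l
      have l2 := mul_right_cancel l
      rw [← (commute_EEj_EE1 hn hj3 hj).eq] at l2
      exact EE0_ne_EE1 hn (mul_left_cancel l2).symm
    · exact iff_of_false (notboth _ hA) (notboth _ hY)
  have stepAll : ∀ i, i + 1 < n → ∀ g, W (EE n i * g) ↔ W g := by
    intro i hi g
    rcases Nat.lt_or_ge i 3 with hi3 | hi3
    · interval_cases i
      · exact ((EQ1 (EE n 0 * g)).1.symm).trans ((EQ1 g).2)
      · exact ((EQ1 (EE n 1 * g)).1.symm).trans (EQ2 g)
      · exact (EQ1 g).1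
    · exact EQ3 i hi3 hi g
  have W1 : W 1 := by
    constructor
    · rw [mul_one, hfix0, hψ1, mul_one]
    · rw [mul_one, hfix1, hψ1, mul_one]
  have closT := closure_T_top hn hTE
  have main : ∀ x : Equiv.Perm (Fin n), ∀ h, W (x * h) ↔ W h := by
    intro x
    have hx : x ∈ Subgroup.closure T := by rw [closT]; exact Subgroup.mem_top x
    refine Subgroup.closure_induction
      (p := fun y _ => ∀ h, W (y * h) ↔ W h) ?_ ?_ ?_ ?_ hx
    · intro s hs h
      obtain ⟨i, hi, rfl⟩ := (hTE s).mp hs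
      exact stepAll i hi h
    · intro h; rw [one_mul]
    · intro a b _ _ ha hb h
      rw [mul_assoc]
      exact (ha (b * h)).trans (hb h)
    · intro a _ ha h
      have := ha (a⁻¹ * h)
      rw [mul_inv_cancel_left] at this
      exact this.symm
  have allW : ∀ g, W g := by
    intro g
    have := main g 1
    rw [mul_one] at this
    exact this.mpr W1
  have Sψ : ∀ s ∈ T, ∀ g, ψ (s * g) = s * ψ g := by
    intro s hs g
    obtain ⟨i, hi, rfl⟩ := (hTE s).mp hs
    rcases Nat.lt_or_ge i 2 with hi2 | hi2
    · interval_cases i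
      · exact (allW g).1
      · exact (allW g).2
    · exact K1 i hi2 hi g
  have main2 : ∀ x : Equiv.Perm (Fin n), ∀ h, ψ (x * h) = x * ψ h := by
    intro x
    have hx : x ∈ Subgroup.closure T := by rw [closT]; exact Subgroup.mem_top x
    refine Subgroup.closure_induction
      (p := fun y _ => ∀ h, ψ (y * h) = y * ψ h) ?_ ?_ ?_ ?_ hx
    · intro s hs h; exact Sψ s hs h
    · intro h; rw [one_mul, one_mul]
    · intro a b _ _ ha hb h
      rw [mul_assoc, ha (b * h), hb h, mul_assoc]
    · intro a _ ha h
      have := ha (a⁻¹ * h)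
      rw [mul_inv_cancel_left] at this
      rw [this, inv_mul_cancel_left]
  apply Equiv.ext
  intro x
  have := main2 x 1
  rw [mul_one, hψ1, mul_one] at this
  simpa using this

end KeyThm


section Gamma

/-- The permutation `c = (0 2)`. -/
def cP (n : ℕ) (h : 2 < n) : Equiv.Perm (Fin n) := Equiv.swap ⟨0, by omega⟩ ⟨2, h⟩

/-- Conjugation by `c` as a permutation of `Sym(n)`. -/
def gammaP (n : ℕ) (h : 2 < n) : Equiv.Perm (Equiv.Perm (Fin n)) :=
  Equiv.mulLeft (cP n h) * Equiv.mulRight (cP n h)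

variable {n : ℕ} (hn : 5 ≤ n) {T : Set (Equiv.Perm (Fin n))}
  (hTE : ∀ s, s ∈ T ↔ ∃ i, i + 1 < n ∧ s = EE n i)

omit hTE in
include hn in
lemma gamma_apply (x : Equiv.Perm (Fin n)) :
    gammaP n (by linarith) x = cP n (by linarith) * x * cP n (by linarith) := by
  show cP n (by omega) * (x * cP n (by omega)) = _
  rw [mul_assoc]

omit hTE in
include hn in
lemma cP_mul_self : cP n (by linarith : 2 < n) * cP n (by linarith) = 1 := Equiv.swap_mul_self _ _

omit hTE in
include hn in
lemma cP_inv : (cP n (by linarith : 2 < n))⁻¹ = cP n (by linarith) := Equiv.swap_inv _ _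

omit hTE in
include hn in
lemma cP_cancel : ∀ w : Equiv.Perm (Fin n), cP n (by linarith) * (cP n (by linarith) * w) = w := by
  intro w
  rw [← mul_assoc, cP_mul_self hn, one_mul]

omit hTE in
include hn in
lemma conj_c0 : cP n (by linarith) * EE n 0 * cP n (by linarith) = EE n 1 := by
  rw [EE0_eq hn, EE1_eq hn]
  exact conj02_A (p3 := ⟨3, by omega⟩) (mk_ne (by omega)) (mk_ne (by omega)) (mk_ne (by omega))
    (mk_ne (by omega)) (mk_ne (by omega)) (mk_ne (by omega))

omit hTE in
include hn in
lemma conj_c1 : cP n (by linarith) * EE n 1 * cP n (by linarith) = EE n 0 := by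
  rw [EE0_eq hn, EE1_eq hn]
  exact conj02_B (p3 := ⟨3, by omega⟩) (mk_ne (by omega)) (mk_ne (by omega)) (mk_ne (by omega))
    (mk_ne (by omega)) (mk_ne (by omega)) (mk_ne (by omega))

omit hTE in
include hn in
lemma conj_c2 : cP n (by linarith) * EE n 2 * cP n (by linarith) = EE n 2 := by
  rw [EE2_eq hn]
  simp only [cP]
  exact conj02_C (p2 := (⟨2, by omega⟩ : Fin n)) (mk_ne (by omega)) (mk_ne (by omega))
    (mk_ne (by omega)) (mk_ne (by omega)) (mk_ne (by omega)) (mk_ne (by omega))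

omit hTE in
include hn in
lemma conj_cj {j : ℕ} (hj3 : 3 ≤ j) (hj : j + 1 < n) :
    cP n (by linarith) * EE n j * cP n (by linarith) = EE n j := by
  rw [EE_ne_two hj (by omega)]
  simp only [cP]
  exact conj_swap_fix (mk_ne (by omega)) (mk_ne (by omega)) (mk_ne (by omega))
    (mk_ne (by omega)) (mk_ne (by omega))

include hn hTE in
lemma conj_T_mem : ∀ z ∈ T, cP n (by linarith) * z * cP n (by linarith) ∈ T := by
  intro z hz
  obtain ⟨i, hi, rfl⟩ := (hTE z).mp hz
  rcases Nat.lt_or_ge i 3 with hi3 | hi3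
  · interval_cases i
    · rw [conj_c0 hn]; exact EE_mem_T hn hTE 1 (by omega)
    · rw [conj_c1 hn]; exact EE_mem_T hn hTE 0 (by omega)
    · rw [conj_c2 hn]; exact EE_mem_T hn hTE 2 (by omega)
  · rw [conj_cj hn hi3 hi]; exact EE_mem_T hn hTE i hi

include hn hTE in
lemma conj_T_iff : ∀ z, cP n (by linarith) * z * cP n (by linarith) ∈ T ↔ z ∈ T := by
  intro z
  constructor
  · intro h
    have h2 := conj_T_mem hn hTE _ h
    have : cP n (by omega : 2 < n) * (cP n (by omega) * z * cP n (by omega)) * cP n (by omega)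
        = z := by
      simp only [mul_assoc, cP_cancel hn]
      rw [cP_mul_self hn, mul_one]
    rwa [this] at h2
  · exact conj_T_mem hn hTE z

include hn hTE in
lemma gamma_mem : gammaP n (by linarith) ∈ dAut (cayAdj (Equiv.Perm (Fin n)) T) := by
  rw [mem_dAut]
  intro u v
  rw [cayAdj_iff, cayAdj_iff]
  have key : gammaP n (by omega) v * (gammaP n (by omega) u)⁻¹ =
      cP n (by omega) * (v * u⁻¹) * cP n (by omega) := by
    rw [gamma_apply hn, gamma_apply hn]
    rw [mul_inv_rev, mul_inv_rev, cP_inv hn]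
    simp only [mul_assoc, cP_cancel hn]
  rw [key]
  exact conj_T_iff hn hTE _

omit hTE in
include hn in
lemma gamma_one : gammaP n (by linarith) 1 = 1 := by
  rw [gamma_apply hn, mul_one, cP_mul_self hn]

omit hTE in
include hn in
lemma gamma_sq : gammaP n (by linarith : 2 < n) * gammaP n (by linarith) = 1 := by
  apply Equiv.ext
  intro x
  show gammaP n (by omega) (gammaP n (by omega) x) = x
  rw [gamma_apply hn, gamma_apply hn]
  simp only [mul_assoc, cP_cancel hn]
  rw [cP_mul_self hn, mul_one]

omit hTE in
include hn in
lemma gamma_inv : (gammaP n (by linarith : 2 < n))⁻¹ = gammaP n (by linarith) :=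
  inv_eq_of_mul_eq_one_right (gamma_sq hn)

include hn hTE in
lemma RleA : (rightReg (Equiv.Perm (Fin n))).range ≤ dAut (cayAdj (Equiv.Perm (Fin n)) T) := by
  rintro φ ⟨k, rfl⟩
  rw [mem_dAut]
  intro u v
  rw [cayAdj_iff, cayAdj_iff]
  show v * k⁻¹ * (u * k⁻¹)⁻¹ ∈ T ↔ _
  rw [mul_inv_rev, inv_inv]
  have : v * k⁻¹ * (k * u⁻¹) = v * u⁻¹ := by
    simp [mul_assoc]
  rw [this]

omit hTE in
include hn in
lemma gamma_not_in_R : gammaP n (by linarith) ∉ (rightReg (Equiv.Perm (Fin n))).range := by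
  rintro ⟨k, hk⟩
  have h1 : gammaP n (by omega) 1 = 1 * k⁻¹ := by rw [← hk]; rfl
  rw [gamma_one hn, one_mul] at h1
  have hk1 : k = 1 := by rw [← inv_inv k, ← h1, inv_one]
  have h2 : gammaP n (by omega) (EE n 0) = EE n 0 * k⁻¹ := by rw [← hk]; rfl
  rw [hk1, inv_one, mul_one, gamma_apply hn, conj_c0 hn] at h2
  exact EE0_ne_EE1 hn h2.symm

include hn hTE in
lemma classify {φ : Equiv.Perm (Equiv.Perm (Fin n))}
    (hφ : φ ∈ dAut (cayAdj (Equiv.Perm (Fin n)) T)) :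
    φ ∈ (rightReg (Equiv.Perm (Fin n))).range ∨
      φ * gammaP n (by linarith) ∈ (rightReg (Equiv.Perm (Fin n))).range := by
  set ψ := rightReg (Equiv.Perm (Fin n)) (φ 1) * φ with hψdef
  have hψmem : ψ ∈ dAut (cayAdj (Equiv.Perm (Fin n)) T) :=
    Subgroup.mul_mem _ (RleA hn hTE ⟨φ 1, rfl⟩) hφ
  have hψapp : ∀ x, ψ x = φ x * (φ 1)⁻¹ := fun x => rfl
  have hψ1 : ψ 1 = 1 := by rw [hψapp, mul_inv_cancel]
  have hls := (local_struct hn hTE hψmem 1).2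
  simp only [mul_one, hψ1] at hls
  rcases hls with ⟨ha, hb⟩ | ⟨ha, hb⟩
  · left
    have hψ1' : ψ = 1 := key hn hTE hψmem hψ1 ha hb
    refine ⟨(φ 1)⁻¹, ?_⟩
    have : rightReg (Equiv.Perm (Fin n)) (φ 1) * φ = 1 := hψ1'
    calc rightReg (Equiv.Perm (Fin n)) ((φ 1)⁻¹)
        = (rightReg (Equiv.Perm (Fin n)) (φ 1))⁻¹ := by rw [map_inv]
      _ = φ := inv_eq_of_mul_eq_one_right this
  · right
    set ψ2 := gammaP n (by omega : 2 < n) * ψ with hψ2def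
    have hψ2mem : ψ2 ∈ dAut (cayAdj (Equiv.Perm (Fin n)) T) :=
      Subgroup.mul_mem _ (gamma_mem hn hTE) hψmem
    have hψ2app : ∀ x, ψ2 x = gammaP n (by omega) (ψ x) := fun x => rfl
    have hψ21 : ψ2 1 = 1 := by rw [hψ2app, hψ1, gamma_one hn]
    have hf0 : ψ2 (EE n 0) = EE n 0 := by
      rw [hψ2app, ha, gamma_apply hn, conj_c1 hn]
    have hf1 : ψ2 (EE n 1) = EE n 1 := by
      rw [hψ2app, hb, gamma_apply hn, conj_c0 hn]
    have hψ2' : ψ2 = 1 := key hn hTE hψ2mem hψ21 hf0 hf1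
    have hψγ : ψ = gammaP n (by omega) := by
      have h := inv_eq_of_mul_eq_one_right
        (show gammaP n (by omega : 2 < n) * ψ = 1 from hψ2')
      exact h.symm.trans (gamma_inv hn)
    refine ⟨(φ 1)⁻¹, ?_⟩
    have hφeq : φ = (rightReg (Equiv.Perm (Fin n)) (φ 1))⁻¹ * gammaP n (by omega) := by
      rw [← hψγ, hψdef, inv_mul_cancel_left]
    calc rightReg (Equiv.Perm (Fin n)) ((φ 1)⁻¹)
        = (rightReg (Equiv.Perm (Fin n)) (φ 1))⁻¹ := by rw [map_inv]
      _ = (rightReg (Equiv.Perm (Fin n)) (φ 1))⁻¹ * (gammaP n (by omega) *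
            gammaP n (by omega)) := by rw [gamma_sq hn, mul_one]
      _ = ((rightReg (Equiv.Perm (Fin n)) (φ 1))⁻¹ * gammaP n (by omega)) *
            gammaP n (by omega) := by rw [mul_assoc]
      _ = φ * gammaP n (by omega) := by rw [← hφeq]

include hn hTE in
lemma index_two : (cayleyRR (Equiv.Perm (Fin n)) T).index = 2 := by
  rw [cayleyRR, Subgroup.index_eq_two_iff]
  refine ⟨⟨gammaP n (by omega), gamma_mem hn hTE⟩, ?_⟩
  rintro ⟨φ, hφ⟩
  have hmem : ∀ (χ : Equiv.Perm (Equiv.Perm (Fin n)))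
      (hχ : χ ∈ dAut (cayAdj (Equiv.Perm (Fin n)) T)),
      ((⟨χ, hχ⟩ : dAut (cayAdj (Equiv.Perm (Fin n)) T)) ∈
        (rightReg (Equiv.Perm (Fin n))).range.subgroupOf (dAut (cayAdj (Equiv.Perm (Fin n)) T)) ↔
        χ ∈ (rightReg (Equiv.Perm (Fin n))).range) := fun χ hχ => Subgroup.mem_subgroupOf
  have hγR := gamma_not_in_R hn
  rcases classify hn hTE hφ with h | h
  · right
    constructor
    · exact (hmem φ hφ).mpr h
    · intro hc
      rw [Subgroup.mem_subgroupOf] at hc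
      apply hγR
      have : gammaP n (by omega : 2 < n) = φ⁻¹ * (φ * gammaP n (by omega)) := by
        rw [inv_mul_cancel_left]
      rw [this]
      exact Subgroup.mul_mem _ (Subgroup.inv_mem _ h) hc
  · left
    constructor
    · exact Subgroup.mem_subgroupOf.mpr h
    · intro hc
      rw [Subgroup.mem_subgroupOf] at hc
      apply hγR
      have : gammaP n (by omega : 2 < n) = φ⁻¹ * (φ * gammaP n (by omega)) := by
        rw [inv_mul_cancel_left]
      rw [this]
      exact Subgroup.mul_mem _ (Subgroup.inv_mem _ hc) h

end Gamma


section RegSub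

/-- Left multiplication by `c` as a permutation of `Sym(n)`. -/
def lamC (n : ℕ) (h : 2 < n) : Equiv.Perm (Equiv.Perm (Fin n)) := Equiv.mulLeft (cP n h)

/-- `ℤ/2 → Perm(Sym(n))` sending the generator to left multiplication by `c`. -/
def F2 (n : ℕ) (h : 2 < n) : Multiplicative (ZMod 2) →* Equiv.Perm (Equiv.Perm (Fin n)) where
  toFun ε := if ε = 1 then 1 else lamC n h
  map_one' := if_pos rfl
  map_mul' := by
    have h2 : ∀ z : Multiplicative (ZMod 2), z = 1 ∨ z = Multiplicative.ofAdd 1 := by decide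
    have hne : (Multiplicative.ofAdd (1 : ZMod 2)) ≠ 1 := by decide
    have hmm : Multiplicative.ofAdd (1 : ZMod 2) * Multiplicative.ofAdd 1 = 1 := by decide
    intro x y
    rcases h2 x with rfl | rfl <;> rcases h2 y with rfl | rfl
    · simp
    · simp
    · simp
    · have hlam : lamC n h * lamC n h = 1 := by
        apply Equiv.ext
        intro z
        show cP n h * (cP n h * z) = z
        rw [← mul_assoc, show cP n h * cP n h = 1 from Equiv.swap_mul_self _ _, one_mul]
      rw [hmm]
      show (1 : Equiv.Perm (Equiv.Perm (Fin n))) = lamC n h * lamC n h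
      rw [hlam]

lemma F2_apply (n : ℕ) (h : 2 < n) (ε : Multiplicative (ZMod 2)) :
    F2 n h ε = if ε = 1 then 1 else lamC n h := rfl

/-- `Alt(n) → Perm(Sym(n))` via the right regular representation. -/
def F1hom (n : ℕ) : alternatingGroup (Fin n) →* Equiv.Perm (Equiv.Perm (Fin n)) :=
  (rightReg (Equiv.Perm (Fin n))).comp (alternatingGroup (Fin n)).subtype

lemma F1hom_apply (n : ℕ) (g : alternatingGroup (Fin n)) (x : Equiv.Perm (Fin n)) :
    F1hom n g x = x * (g : Equiv.Perm (Fin n))⁻¹ := rfl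

lemma F12_comm (n : ℕ) (h : 2 < n) :
    ∀ (m : alternatingGroup (Fin n)) (ε : Multiplicative (ZMod 2)),
      Commute (F1hom n m) (F2 n h ε) := by
  intro m ε
  rw [F2_apply]
  by_cases hε : ε = 1
  · rw [if_pos hε]; exact Commute.one_right _
  · rw [if_neg hε]
    apply Equiv.ext
    intro z
    show (F1hom n m) (lamC n h z) = lamC n h (F1hom n m z)
    show (cP n h * z) * (m : Equiv.Perm (Fin n))⁻¹ = cP n h * (z * (m : Equiv.Perm (Fin n))⁻¹)
    rw [mul_assoc]

variable {n : ℕ} (hn : 5 ≤ n) {T : Set (Equiv.Perm (Fin n))}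
  (hTE : ∀ s, s ∈ T ↔ ∃ i, i + 1 < n ∧ s = EE n i)

include hn hTE in
lemma lamC_mem : lamC n (by linarith) ∈ dAut (cayAdj (Equiv.Perm (Fin n)) T) := by
  rw [mem_dAut]
  intro u v
  rw [cayAdj_iff, cayAdj_iff]
  have key : lamC n (by omega : 2 < n) v * (lamC n (by omega) u)⁻¹ =
      cP n (by omega) * (v * u⁻¹) * cP n (by omega) * cP n (by omega) * cP n (by omega) := by
    show (cP n (by omega) * v) * (cP n (by omega) * u)⁻¹ = _
    rw [mul_inv_rev, cP_inv hn]
    simp only [mul_assoc, cP_cancel hn]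
  rw [key, mul_assoc (cP n (by omega) * (v * u⁻¹) * cP n (by omega)), cP_mul_self hn, mul_one]
  exact conj_T_iff hn hTE _

include hn in
omit hTE in
lemma sign_cP : Equiv.Perm.sign (cP n (by linarith)) = -1 := by
  show Equiv.Perm.sign (Equiv.swap (⟨0, by omega⟩ : Fin n) ⟨2, by omega⟩) = -1
  exact Equiv.Perm.sign_swap (mk_ne (by omega))

include hn hTE in
lemma reg_sub : ∃ K : Subgroup (Equiv.Perm (Equiv.Perm (Fin n))),
    K ≤ dAut (cayAdj (Equiv.Perm (Fin n)) T) ∧ IsRegularSub K ∧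
    Nonempty (K ≃* (alternatingGroup (Fin n) × Multiplicative (ZMod 2))) := by
  have h3 : (2:ℕ) < n := by omega
  have h2cases : ∀ z : Multiplicative (ZMod 2), z = 1 ∨ z = Multiplicative.ofAdd 1 := by decide
  have hne1 : (Multiplicative.ofAdd (1 : ZMod 2)) ≠ 1 := by decide
  set F := (F1hom n).noncommCoprod (F2 n h3) (F12_comm n h3) with hFdef
  have hFapp : ∀ (g : alternatingGroup (Fin n)) (ε : Multiplicative (ZMod 2))
      (x : Equiv.Perm (Fin n)),
      (F (g, ε)) x = (if ε = 1 then x else cP n h3 * x) * (g : Equiv.Perm (Fin n))⁻¹ := by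
    intro g ε x
    have : F (g, ε) = F1hom n g * F2 n h3 ε := MonoidHom.noncommCoprod_apply _ _ _ _
    rw [this]
    show (F1hom n g) ((F2 n h3 ε) x) = _
    rw [F2_apply]
    by_cases hε : ε = 1
    · simp only [if_pos hε]
      all_goals rfl
    · simp only [if_neg hε]
      all_goals rfl
  have hsign : ∀ g : alternatingGroup (Fin n),
      Equiv.Perm.sign (g : Equiv.Perm (Fin n)) = 1 := by
    intro g
    exact Equiv.Perm.mem_alternatingGroup.mp g.2
  have hFinj : Function.Injective F := by
    rw [injective_iff_map_eq_one]
    rintro ⟨g, ε⟩ h1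
    rcases h2cases ε with rfl | rfl
    · have h1' : F (g, (1 : Multiplicative (ZMod 2))) 1 = 1 := by rw [h1]; rfl
      rw [hFapp] at h1'
      simp only [eq_self_iff_true, if_true, one_mul] at h1'
      have hg : (g : Equiv.Perm (Fin n)) = 1 := by
        rw [← inv_inv (g : Equiv.Perm (Fin n)), h1', inv_one]
      exact Prod.ext (Subtype.ext hg) rfl
    · exfalso
      have this : F (g, Multiplicative.ofAdd (1 : ZMod 2)) 1 = 1 := by rw [h1]; rfl
      rw [hFapp] at this
      simp only [if_neg hne1, mul_one] at this
      have hg : (g : Equiv.Perm (Fin n)) = cP n h3 := by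
        have h2 : cP n h3 * (g : Equiv.Perm (Fin n))⁻¹ = 1 := this
        have h3' : (g : Equiv.Perm (Fin n))⁻¹ = (cP n h3)⁻¹ :=
          eq_inv_of_mul_eq_one_right h2
        rw [← inv_inv (g : Equiv.Perm (Fin n)), h3', inv_inv]
      have := hsign g
      rw [hg, sign_cP hn] at this
      exact absurd this (by decide)
  refine ⟨F.range, ?_, ?_, ⟨(MonoidHom.ofInjective hFinj).symm⟩⟩
  · rintro φ ⟨⟨g, ε⟩, rfl⟩
    have : F (g, ε) = F1hom n g * F2 n h3 ε := MonoidHom.noncommCoprod_apply _ _ _ _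
    rw [this]
    apply Subgroup.mul_mem
    · exact RleA hn hTE ⟨(g : Equiv.Perm (Fin n)), rfl⟩
    · rw [F2_apply]
      by_cases hε : ε = 1
      · rw [if_pos hε]; exact Subgroup.one_mem _
      · rw [if_neg hε]; exact lamC_mem hn hTE
  · intro v w
    by_cases hs : Equiv.Perm.sign (w⁻¹ * v) = 1
    · refine ⟨⟨F (⟨w⁻¹ * v, Equiv.Perm.mem_alternatingGroup.mpr hs⟩, 1), ⟨_, rfl⟩⟩, ?_, ?_⟩
      · show F (_, _) v = w
        rw [hFapp]
        simp only [eq_self_iff_true, if_true]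
        group
      · rintro ⟨χ, ⟨⟨g, ε⟩, rfl⟩⟩ hval
        have hval2 : F (g, ε) v = w := hval
        rw [hFapp] at hval2
        apply Subtype.ext
        show F (g, ε) = F (_, _)
        rcases h2cases ε with rfl | rfl
        · simp only [eq_self_iff_true, if_true] at hval2
          have hg : (g : Equiv.Perm (Fin n)) = w⁻¹ * v := by
            have : (g : Equiv.Perm (Fin n))⁻¹ = v⁻¹ * w := by
              rw [← one_mul ((g : Equiv.Perm (Fin n))⁻¹), ← inv_mul_cancel v, mul_assoc, hval2]
            rw [← inv_inv (g : Equiv.Perm (Fin n)), this, mul_inv_rev, inv_inv]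
          congr 1
          exact Prod.ext (Subtype.ext hg) rfl
        · exfalso
          simp only [if_neg hne1] at hval2
          have hg : (g : Equiv.Perm (Fin n)) = w⁻¹ * (cP n h3 * v) := by
            have : (g : Equiv.Perm (Fin n))⁻¹ = (cP n h3 * v)⁻¹ * w := by
              rw [← one_mul ((g : Equiv.Perm (Fin n))⁻¹), ← inv_mul_cancel (cP n h3 * v),
                mul_assoc, hval2]
            rw [← inv_inv (g : Equiv.Perm (Fin n)), this, mul_inv_rev, inv_inv]
          have hsg := hsign g
          rw [hg] at hsg
          rw [map_mul, map_mul, sign_cP hn] at hsg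
          rw [map_mul] at hs
          rw [map_inv] at hsg hs
          rcases Int.units_eq_one_or (Equiv.Perm.sign w) with hw | hw <;>
            rcases Int.units_eq_one_or (Equiv.Perm.sign v) with hv | hv <;>
              rw [hw, hv] at hsg hs <;> simp_all
    · have hs2 : Equiv.Perm.sign (w⁻¹ * v) = -1 :=
        (Int.units_eq_one_or _).resolve_left hs
      have hmem : Equiv.Perm.sign (w⁻¹ * (cP n h3 * v)) = 1 := by
        rw [map_mul, map_mul, sign_cP hn]
        rw [map_mul, map_inv] at hs2
        rw [map_inv]
        rcases Int.units_eq_one_or (Equiv.Perm.sign w) with hw | hw <;>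
          rcases Int.units_eq_one_or (Equiv.Perm.sign v) with hv | hv <;>
            rw [hw, hv] at hs2 ⊢ <;> simp_all <;> decide
      refine ⟨⟨F (⟨w⁻¹ * (cP n h3 * v), Equiv.Perm.mem_alternatingGroup.mpr hmem⟩,
        Multiplicative.ofAdd 1), ⟨_, rfl⟩⟩, ?_, ?_⟩
      · show F (_, _) v = w
        rw [hFapp]
        simp only [if_neg hne1]
        group
      · rintro ⟨χ, ⟨⟨g, ε⟩, rfl⟩⟩ hval
        have hval2 : F (g, ε) v = w := hval
        rw [hFapp] at hval2
        apply Subtype.ext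
        show F (g, ε) = F (_, _)
        rcases h2cases ε with rfl | rfl
        · exfalso
          simp only [eq_self_iff_true, if_true] at hval2
          have hg : (g : Equiv.Perm (Fin n)) = w⁻¹ * v := by
            have : (g : Equiv.Perm (Fin n))⁻¹ = v⁻¹ * w := by
              rw [← one_mul ((g : Equiv.Perm (Fin n))⁻¹), ← inv_mul_cancel v, mul_assoc, hval2]
            rw [← inv_inv (g : Equiv.Perm (Fin n)), this, mul_inv_rev, inv_inv]
          have hsg := hsign g
          rw [hg] at hsg
          exact hs (by rw [← hsg])
        · simp only [if_neg hne1] at hval2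
          have hg : (g : Equiv.Perm (Fin n)) = w⁻¹ * (cP n h3 * v) := by
            have : (g : Equiv.Perm (Fin n))⁻¹ = (cP n h3 * v)⁻¹ * w := by
              rw [← one_mul ((g : Equiv.Perm (Fin n))⁻¹), ← inv_mul_cancel (cP n h3 * v),
                mul_assoc, hval2]
            rw [← inv_inv (g : Equiv.Perm (Fin n)), this, mul_inv_rev, inv_inv]
          congr 1
          exact Prod.ext (Subtype.ext hg) rfl

end RegSub

end S19

/-- For `n ≥ 5`, the Cayley graph on `Sym(n)` with connection set
`T = {(1 2), (2 3), (2 4)} ∪ {(i i+1) : 4 ≤ i ≤ n-1}` (written here 0-indexed) is a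
Cayley graph of Cayley index 2 whose automorphism group contains a regular subgroup
isomorphic to `Alt(n) × ℤ₂`. -/
theorem stmt_19 (n : ℕ) (hn : 5 ≤ n)
    (T : Set (Equiv.Perm (Fin n)))
    (hT : T = {Equiv.swap ⟨0, by omega⟩ ⟨1, by omega⟩,
        Equiv.swap ⟨1, by omega⟩ ⟨2, by omega⟩,
        Equiv.swap ⟨1, by omega⟩ ⟨3, by omega⟩} ∪
      {σ | ∃ (i : ℕ) (h : i + 1 < n), 3 ≤ i ∧
        σ = Equiv.swap ⟨i, by omega⟩ ⟨i + 1, h⟩}) :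
    (∀ s ∈ T, s⁻¹ ∈ T) ∧ (1 : Equiv.Perm (Fin n)) ∉ T ∧
    (cayleyRR (Equiv.Perm (Fin n)) T).index = 2 ∧
    ∃ K : Subgroup (Equiv.Perm (Equiv.Perm (Fin n))),
      K ≤ dAut (cayAdj (Equiv.Perm (Fin n)) T) ∧ IsRegularSub K ∧
      Nonempty (K ≃* (alternatingGroup (Fin n) × Multiplicative (ZMod 2))) := by
  have hTE : ∀ s, s ∈ T ↔ ∃ i, i + 1 < n ∧ s = S19.EE n i :=
    fun s => S19.mem_T_iff hn hT s
  exact ⟨S19.T_inv hn hTE, S19.one_not_mem_T hn hTE, S19.index_two hn hTE,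
    S19.reg_sub hn hTE⟩
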